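/- Given the map F(x,y,z,w) = (y, z, w, max{0,y,z,w} - x) on ℝ⁴, the function V₁(x,y,z,w) = max{0,x,y,z,w} + max{0,-x} + max{0,-y} + max{0,-z} + max{0,-w} is a first integral of F, i.e. V₁(F(p)) = V₁(p) for all p ∈ ℝ⁴. -/
import Mathlib

noncomputable def F : ℝ × ℝ × ℝ × ℝ → ℝ × ℝ × ℝ × ℝ :=
  fun p => (p.2.1, p.2.2.1, p.2.2.2, max (max (max 0 p.2.1) p.2.2.1) p.2.2.2 - p.1)

noncomputable def V1 : ℝ × ℝ × ℝ × ℝ → ℝ :=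
  fun p => max (max (max (max 0 p.1) p.2.1) p.2.2.1) p.2.2.2 +
    max 0 (-p.1) + max 0 (-p.2.1) + max 0 (-p.2.2.1) + max 0 (-p.2.2.2)

lemma key (m x : ℝ) :
    max m (m - x) + max 0 (-(m - x)) = max m x + max 0 (-x) := by
  rcases le_total x 0 with hx | hx <;> rcases le_total x m with h | h <;>
    rw [max_def, max_def, max_def, max_def] <;> split_ifs <;> linarith

theorem stmt_5 : ∀ p : ℝ × ℝ × ℝ × ℝ, V1 (F p) = V1 p := by
  rintro ⟨x, y, z, w⟩
  show max (max (max (max 0 y) z) w) (max (max (max 0 y) z) w - x) +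
      max 0 (-y) + max 0 (-z) + max 0 (-w) + max 0 (-(max (max (max 0 y) z) w - x)) =
      max (max (max (max 0 x) y) z) w + max 0 (-x) + max 0 (-y) + max 0 (-z) + max 0 (-w)
  have h1 : max (max (max (max 0 x) y) z) w = max (max (max (max 0 y) z) w) x := by
    simp only [max_comm, max_left_comm, max_assoc]
  have h2 := key (max (max (max 0 y) z) w) x
  rw [h1]
  linarith
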